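/- Under the setup of the previous statement (f differentiable with Jacobian J; v_i = J(x_i) p_i, w_i = (J(x_j) − J(x_i)) p_i, matrices P_j, V_j, W_j with these columns; r_j = −f(x_j), y_j = V_j^T r_j, x_{j+1} = x_j + P_j y_j, r_{j+1} = −f(x_{j+1}), r̃_{j+1} = r_j − V_j y_j, s_j = f(x_{j+1}) − f(x_j) − J(x_j)(x_{j+1} − x_j)), assume in addition that the columns of V_j are orthonormal. Then ‖r̃_{j+1} − r_{j+1}‖₂ ≤ ‖W_j‖₂ ‖r_j‖₂ + ‖s_j‖₂, where ‖W_j‖₂ is the operator 2-norm of W_j. -/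

import Mathlib

open Matrix

noncomputable def norm2 {n : ℕ} (x : Fin n → ℝ) : ℝ := Real.sqrt (x ⬝ᵥ x)

noncomputable def opNorm2 {n m : ℕ} (W : Matrix (Fin n) (Fin m) ℝ) : ℝ :=
  ‖LinearMap.toContinuousLinearMap (Matrix.toEuclideanLin W)‖

lemma norm2_eq_norm {n : ℕ} (x : Fin n → ℝ) :
    norm2 x = ‖(WithLp.equiv 2 (Fin n → ℝ)).symm x‖ := by
  rw [EuclideanSpace.norm_eq]
  unfold norm2 dotProduct
  congr 1
  apply Finset.sum_congr rfl
  intro i _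
  simp [Real.norm_eq_abs, sq_abs, sq]

lemma norm2_nonneg {n : ℕ} (x : Fin n → ℝ) : 0 ≤ norm2 x := Real.sqrt_nonneg _

lemma norm2_mulVec_le {n m : ℕ} (M : Matrix (Fin n) (Fin m) ℝ) (y : Fin m → ℝ) :
    norm2 (M.mulVec y) ≤ opNorm2 M * norm2 y := by
  rw [norm2_eq_norm, norm2_eq_norm]
  exact (LinearMap.toContinuousLinearMap (Matrix.toEuclideanLin M)).le_opNorm _

lemma norm2_add_le {n : ℕ} (x y : Fin n → ℝ) : norm2 (x + y) ≤ norm2 x + norm2 y := by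
  simp only [norm2_eq_norm]
  rw [show (WithLp.equiv 2 (Fin n → ℝ)).symm (x + y)
      = (WithLp.equiv 2 (Fin n → ℝ)).symm x + (WithLp.equiv 2 (Fin n → ℝ)).symm y from rfl]
  exact norm_add_le _ _

lemma norm2_sq {n : ℕ} (x : Fin n → ℝ) : norm2 x ^ 2 = x ⬝ᵥ x := by
  unfold norm2
  exact Real.sq_sqrt (Finset.sum_nonneg fun i _ => mul_self_nonneg _)

lemma dot_le_norm2 {n : ℕ} (x y : Fin n → ℝ) : x ⬝ᵥ y ≤ norm2 x * norm2 y := by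
  have h := abs_real_inner_le_norm ((WithLp.equiv 2 (Fin n → ℝ)).symm x)
    ((WithLp.equiv 2 (Fin n → ℝ)).symm y)
  rw [← norm2_eq_norm, ← norm2_eq_norm] at h
  change |y ⬝ᵥ star x| ≤ _ at h
  rw [star_trivial, dotProduct_comm] at h
  exact (le_abs_self _).trans h

/-- norm-bound part of Proposition 2 of the paper.
Under the setup of Statement 1, if in addition the columns of `V` are orthonormal, then
`‖r̃_{j+1} - r_{j+1}‖₂ ≤ ‖W‖₂ ‖r_j‖₂ + ‖s_j‖₂`. -/
theorem nltgcr_residual_deviation_bound {n k : ℕ}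
    (f : (Fin n → ℝ) → (Fin n → ℝ))
    (J : (Fin n → ℝ) → Matrix (Fin n) (Fin n) ℝ)
    (hf : ∀ x, HasFDerivAt f
      (LinearMap.toContinuousLinearMap (Matrix.mulVecLin (J x))) x)
    (xs ps : Fin (k + 1) → (Fin n → ℝ))
    (P V W : Matrix (Fin n) (Fin (k + 1)) ℝ)
    (hP : ∀ a i, P a i = ps i a)
    (hV : ∀ a i, V a i = (J (xs i)).mulVec (ps i) a)
    (hW : ∀ a i, W a i = ((J (xs (Fin.last k)) - J (xs i)).mulVec (ps i)) a)
    (hVorth : Vᵀ * V = 1)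
    (rj yj xnext rnext rtilde sj : _)
    (hrj : rj = -f (xs (Fin.last k)))
    (hyj : yj = Vᵀ.mulVec rj)
    (hxnext : xnext = xs (Fin.last k) + P.mulVec yj)
    (hrnext : rnext = -f xnext)
    (hrtilde : rtilde = rj - V.mulVec yj)
    (hsj : sj = f xnext - f (xs (Fin.last k))
      - (J (xs (Fin.last k))).mulVec (xnext - xs (Fin.last k))) :
    norm2 (rtilde - rnext) ≤ opNorm2 W * norm2 rj + norm2 sj := by
  -- key identity: J(x_j) * P - V = W
  have hmW : J (xs (Fin.last k)) * P - V = W := by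
    ext a i
    rw [hW, Matrix.sub_mulVec]
    simp only [Matrix.sub_apply, Matrix.mul_apply, Pi.sub_apply]
    rw [hV]
    congr 1
    simp [Matrix.mulVec, dotProduct, hP]
  -- rtilde - rnext = W yj + sj
  have hkey : rtilde - rnext = W.mulVec yj + sj := by
    rw [hrtilde, hrnext, hsj, hrj, hxnext]
    have hx : xs (Fin.last k) + P.mulVec yj - xs (Fin.last k) = P.mulVec yj := by abel
    rw [hx, ← hmW, Matrix.sub_mulVec, ← Matrix.mulVec_mulVec]
    abel
  -- ‖yj‖ ≤ ‖rj‖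
  have hy : norm2 yj ≤ norm2 rj := by
    have hVy : (V.mulVec yj) ⬝ᵥ (V.mulVec yj) = yj ⬝ᵥ yj := by
      rw [Matrix.dotProduct_mulVec, Matrix.vecMul_mulVec, hVorth, Matrix.vecMul_one]
    have hnVy : norm2 (V.mulVec yj) = norm2 yj := by unfold norm2; rw [hVy]
    have h1 : yj ⬝ᵥ yj ≤ norm2 yj * norm2 rj := by
      calc yj ⬝ᵥ yj = (V.mulVec yj) ⬝ᵥ rj := by
            rw [hyj, Matrix.dotProduct_mulVec, Matrix.vecMul_transpose]
        _ ≤ norm2 (V.mulVec yj) * norm2 rj := dot_le_norm2 _ _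
        _ = norm2 yj * norm2 rj := by rw [hnVy]
    rcases eq_or_lt_of_le (norm2_nonneg yj) with h0 | h0
    · rw [← h0]; exact norm2_nonneg rj
    · have := norm2_sq yj
      nlinarith
  calc norm2 (rtilde - rnext) = norm2 (W.mulVec yj + sj) := by rw [hkey]
    _ ≤ norm2 (W.mulVec yj) + norm2 sj := norm2_add_le _ _
    _ ≤ opNorm2 W * norm2 yj + norm2 sj := by gcongr; apply norm2_mulVec_le
    _ ≤ opNorm2 W * norm2 rj + norm2 sj := by
        gcongr
        exact (norm_nonneg _ : (0:ℝ) ≤ opNorm2 W)
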